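/- Let u : [τ, â) → X solve the integral equation u(a) = e^{−D(a−τ)} Π(τ,a) η + D ∫_τ^a e^{−D(a−l)} Π(l,a) K u(l) dl, where ‖Π(τ,a)‖ ≤ e^{−(μ̃)(a−τ)} and ‖K‖ ≤ 1, D > 0. Then ‖u(a)‖ ≤ e^{−μ̃(a−τ)} ‖η‖ for all a ≥ τ. In particular the evolution family U(τ,a) with diffusion satisfies ‖U(τ,a)‖ ≤ e^{−μ̃(a−τ)}. -/

import Mathlib

open MeasureTheory
open scoped ENNReal

/-- Gronwall estimate for the evolution family with nonlocal diffusion: if `u` solves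
`u(a) = e^{-D(a-τ)} Π(τ,a)η + D ∫_τ^a e^{-D(a-l)} Π(l,a) K u(l) dl` with
`‖Π(τ,a)‖ ≤ e^{-μ̃(a-τ)}` and `‖K‖ ≤ 1`, then `‖u(a)‖ ≤ e^{-μ̃(a-τ)} ‖η‖`;
in particular `‖U(τ,a)‖ ≤ e^{-μ̃(a-τ)}`. -/
theorem stmt_4 {X : Type*} [NormedAddCommGroup X] [NormedSpace ℝ X] [CompleteSpace X]
    (ahat : ℝ≥0∞) (μt D : ℝ) (hμt : 0 < μt) (hD : 0 < D)
    (K : X →L[ℝ] X) (hK : ‖K‖ ≤ 1)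
    (Pi : ℝ → ℝ → (X →L[ℝ] X))
    (hPi : ∀ τ a : ℝ, τ ≤ a → ‖Pi τ a‖ ≤ Real.exp (-(μt * (a - τ))))
    (τ : ℝ) (hτ : 0 ≤ τ) (η : X) (u : ℝ → X) (hu : Continuous u)
    (heq : ∀ a : ℝ, τ ≤ a → ENNReal.ofReal a < ahat →
      u a = Real.exp (-(D * (a - τ))) • Pi τ a η +
        D • ∫ l in τ..a, Real.exp (-(D * (a - l))) • Pi l a (K (u l))) :
    ∀ a : ℝ, τ ≤ a → ENNReal.ofReal a < ahat →
      ‖u a‖ ≤ Real.exp (-(μt * (a - τ))) * ‖η‖ := by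
  intro a₀ ha₀ ha₀'
  set c : ℝ := D + μt with hc
  set f : ℝ → ℝ := fun a => Real.exp (c * (a - τ)) * ‖u a‖ with hf
  have hfc : Continuous f :=
    (Real.continuous_exp.comp (by continuity)).mul hu.norm
  have hfnonneg : ∀ a, 0 ≤ f a := fun a =>
    mul_nonneg (Real.exp_pos _).le (norm_nonneg _)
  -- the key integral inequality for f
  have key : ∀ a ∈ Set.Icc τ a₀, f a ≤ ‖η‖ + D * ∫ l in τ..a, f l := by
    rintro a ⟨h1, h2⟩
    have haa : ENNReal.ofReal a < ahat :=
      lt_of_le_of_lt (ENNReal.ofReal_le_ofReal h2) ha₀'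
    have hEq := heq a h1 haa
    -- bound on the integrand
    have hbound : ∀ l ∈ Set.uIoc τ a,
        ‖Real.exp (-(D * (a - l))) • Pi l a (K (u l))‖ ≤
          Real.exp (-(c * (a - l))) * ‖u l‖ := by
      intro l hl
      rw [Set.uIoc_of_le h1] at hl
      have hla : l ≤ a := hl.2
      have hPb : ‖Pi l a (K (u l))‖ ≤ Real.exp (-(μt * (a - l))) * ‖u l‖ := by
        calc ‖Pi l a (K (u l))‖ ≤ ‖Pi l a‖ * ‖K (u l)‖ := (Pi l a).le_opNorm _
          _ ≤ Real.exp (-(μt * (a - l))) * ‖u l‖ := by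
              apply mul_le_mul (hPi l a hla) ?_ (norm_nonneg _) (Real.exp_pos _).le
              calc ‖K (u l)‖ ≤ ‖K‖ * ‖u l‖ := K.le_opNorm _
                _ ≤ 1 * ‖u l‖ := mul_le_mul_of_nonneg_right hK (norm_nonneg _)
                _ = ‖u l‖ := one_mul _
      rw [norm_smul, Real.norm_eq_abs, abs_of_pos (Real.exp_pos _)]
      calc Real.exp (-(D * (a - l))) * ‖Pi l a (K (u l))‖
          ≤ Real.exp (-(D * (a - l))) * (Real.exp (-(μt * (a - l))) * ‖u l‖) :=
            mul_le_mul_of_nonneg_left hPb (Real.exp_pos _).le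
        _ = Real.exp (-(c * (a - l))) * ‖u l‖ := by
            rw [← mul_assoc, ← Real.exp_add]; rw [hc]; ring_nf
    have hgint : IntervalIntegrable (fun l => Real.exp (-(c * (a - l))) * ‖u l‖)
        volume τ a :=
      ((Real.continuous_exp.comp (by continuity)).mul hu.norm).intervalIntegrable τ a
    have hgnonneg : (0:ℝ) ≤ ∫ l in τ..a, Real.exp (-(c * (a - l))) * ‖u l‖ :=
      intervalIntegral.integral_nonneg h1 fun l _ =>
        mul_nonneg (Real.exp_pos _).le (norm_nonneg _)
    have hnorm : ‖∫ l in τ..a, Real.exp (-(D * (a - l))) • Pi l a (K (u l))‖ ≤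
        ∫ l in τ..a, Real.exp (-(c * (a - l))) * ‖u l‖ := by
      have := intervalIntegral.norm_integral_le_abs_of_norm_le
        ((ae_restrict_mem measurableSet_uIoc).mono fun l hl => hbound l hl) hgint
      rwa [abs_of_nonneg hgnonneg] at this
    -- bound on ‖u a‖
    have hua : ‖u a‖ ≤ Real.exp (-(c * (a - τ))) * ‖η‖ +
        D * ∫ l in τ..a, Real.exp (-(c * (a - l))) * ‖u l‖ := by
      rw [hEq]
      refine le_trans (norm_add_le _ _) (add_le_add ?_ ?_)
      · rw [norm_smul, Real.norm_eq_abs, abs_of_pos (Real.exp_pos _)]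
        calc Real.exp (-(D * (a - τ))) * ‖Pi τ a η‖
            ≤ Real.exp (-(D * (a - τ))) * (Real.exp (-(μt * (a - τ))) * ‖η‖) := by
              apply mul_le_mul_of_nonneg_left ?_ (Real.exp_pos _).le
              calc ‖Pi τ a η‖ ≤ ‖Pi τ a‖ * ‖η‖ := (Pi τ a).le_opNorm _
                _ ≤ Real.exp (-(μt * (a - τ))) * ‖η‖ :=
                    mul_le_mul_of_nonneg_right (hPi τ a h1) (norm_nonneg _)
          _ = Real.exp (-(c * (a - τ))) * ‖η‖ := by
              rw [← mul_assoc, ← Real.exp_add]; rw [hc]; ring_nf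
      · rw [norm_smul, Real.norm_eq_abs, abs_of_pos hD]
        exact mul_le_mul_of_nonneg_left hnorm hD.le
    -- multiply by exp (c * (a - τ))
    have hexp : ∀ l : ℝ, Real.exp (c * (a - τ)) * (Real.exp (-(c * (a - l))) * ‖u l‖)
        = f l := by
      intro l
      simp only [hf, ← mul_assoc, ← Real.exp_add]
      ring_nf
    calc f a = Real.exp (c * (a - τ)) * ‖u a‖ := rfl
      _ ≤ Real.exp (c * (a - τ)) * (Real.exp (-(c * (a - τ))) * ‖η‖ +
          D * ∫ l in τ..a, Real.exp (-(c * (a - l))) * ‖u l‖) :=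
        mul_le_mul_of_nonneg_left hua (Real.exp_pos _).le
      _ = ‖η‖ + D * ∫ l in τ..a, f l := by
        rw [mul_add, ← mul_assoc, ← Real.exp_add, ← mul_assoc,
          mul_comm (Real.exp (c * (a - τ))) D, mul_assoc,
          ← intervalIntegral.integral_const_mul]
        simp only [hexp]
        norm_num
  -- Gronwall for F a = ∫ l in τ..a, f l
  set F : ℝ → ℝ := fun a => ∫ l in τ..a, f l with hF
  have hFd : ∀ x ∈ Set.Ico τ a₀, HasDerivWithinAt F (f x) (Set.Ici x) x := by
    intro x _
    exact (intervalIntegral.integral_hasDerivAt_right (hfc.intervalIntegrable τ x)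
      hfc.aestronglyMeasurable.stronglyMeasurableAtFilter
      hfc.continuousAt).hasDerivWithinAt
  have hFnonneg : ∀ x ∈ Set.Icc τ a₀, 0 ≤ F x := fun x hx =>
    intervalIntegral.integral_nonneg hx.1 fun l _ => hfnonneg l
  have hFbound := norm_le_gronwallBound_of_norm_deriv_right_le
    (f := F) (f' := f) (δ := 0) (K := D) (ε := ‖η‖) (a := τ) (b := a₀)
    (HasDerivAt.continuousOn fun x _ =>
      intervalIntegral.integral_hasDerivAt_right (hfc.intervalIntegrable τ x)
        hfc.aestronglyMeasurable.stronglyMeasurableAtFilter hfc.continuousAt)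
    hFd
    (by simp [hF, intervalIntegral.integral_same])
    (by
      intro x hx
      rw [Real.norm_eq_abs, abs_of_nonneg (hfnonneg x), Real.norm_eq_abs,
        abs_of_nonneg (hFnonneg x ⟨hx.1, hx.2.le⟩)]
      have := key x ⟨hx.1, hx.2.le⟩
      linarith)
  have hFa₀ : F a₀ ≤ gronwallBound 0 D ‖η‖ (a₀ - τ) := by
    have := hFbound a₀ ⟨ha₀, le_rfl⟩
    rwa [Real.norm_eq_abs, abs_of_nonneg (hFnonneg a₀ ⟨ha₀, le_rfl⟩)] at this
  have hgb : gronwallBound 0 D ‖η‖ (a₀ - τ) =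
      ‖η‖ / D * (Real.exp (D * (a₀ - τ)) - 1) := by
    rw [gronwallBound_of_K_ne_0 hD.ne']
    simp
  have hfa₀ : f a₀ ≤ ‖η‖ * Real.exp (D * (a₀ - τ)) := by
    have h1 := key a₀ ⟨ha₀, le_rfl⟩
    have h2 : D * F a₀ ≤ ‖η‖ * (Real.exp (D * (a₀ - τ)) - 1) := by
      calc D * F a₀ ≤ D * (‖η‖ / D * (Real.exp (D * (a₀ - τ)) - 1)) := by
            apply mul_le_mul_of_nonneg_left _ hD.le
            rw [← hgb]; exact hFa₀
        _ = ‖η‖ * (Real.exp (D * (a₀ - τ)) - 1) := by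
            field_simp
      
    calc f a₀ ≤ ‖η‖ + D * F a₀ := h1
      _ ≤ ‖η‖ + ‖η‖ * (Real.exp (D * (a₀ - τ)) - 1) := by linarith
      _ = ‖η‖ * Real.exp (D * (a₀ - τ)) := by ring
  -- conclude
  have hfin : Real.exp (c * (a₀ - τ)) * ‖u a₀‖ ≤ ‖η‖ * Real.exp (D * (a₀ - τ)) := hfa₀
  have hepos := Real.exp_pos (c * (a₀ - τ))
  rw [← sub_nonneg]
  have expand : Real.exp (c * (a₀ - τ)) *
      (Real.exp (-(μt * (a₀ - τ))) * ‖η‖ - ‖u a₀‖) =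
      ‖η‖ * Real.exp (D * (a₀ - τ)) - Real.exp (c * (a₀ - τ)) * ‖u a₀‖ := by
    rw [mul_sub, ← mul_assoc, ← Real.exp_add]
    rw [hc]; ring_nf
  have : 0 ≤ Real.exp (c * (a₀ - τ)) *
      (Real.exp (-(μt * (a₀ - τ))) * ‖η‖ - ‖u a₀‖) := by
    rw [expand]; linarith
  exact nonneg_of_mul_nonneg_right this hepos
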